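/- Let α ∈ [π/2, π) and a ∈ [0, 1), and set x = cos α. Then all three roots of the cubic polynomial f(z) = z^3 + (1/2 + (3/2)a + x)z^2 + (a + 2ax)z + (ax + (1/2)a - 1/2) lie in the open unit disk. -/

import Mathlib

/-- `f(t) < 0` for `0 < t ≤ (1-a*u)/2`. -/
lemma cubic_key_mid (a u t : ℝ) (ha₁ : 0 ≤ a) (ha₂ : a < 1) (hu₁ : -1 < u) (hu₂ : u ≤ 1)
    (ht : 0 < t) (htm : t ≤ (1 - a*u)/2) :
    t^3 + ((u+3*a)/2)*t^2 + (a*u)*t + (a*u-1)/2 < 0 := by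
  have hm : 0 < (1 - a*u)/2 := by nlinarith
  rcases le_or_gt (t^2 + ((u+3*a)/2)*t + a*u) 0 with h | h
  · nlinarith [mul_nonpos_of_nonneg_of_nonpos ht.le h]
  · have hq1 : t^2 + ((u+3*a)/2)*t + a*u < 1 := by
      nlinarith [mul_nonneg ht.le (sub_nonneg.2 htm),
        mul_pos (show (0:ℝ) < 1 - a by linarith) (show (0:ℝ) < 3 - u by linarith),
        mul_pos ht (show (0:ℝ) < 1 - a by linarith),
        mul_pos ht (show (0:ℝ) < 3 - u by linarith),
        mul_pos (mul_pos ht (show (0:ℝ) < 1 - a by linarith)) (show (0:ℝ) < 3 - u by linarith)]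
    nlinarith [mul_lt_mul_of_pos_left hq1 ht]

/-- `f(t) > 0` for `t ≥ 1`. -/
lemma cubic_key_pos (a u t : ℝ) (ha₁ : 0 ≤ a) (ha₂ : a < 1) (hu₁ : -1 < u) (hu₂ : u ≤ 1)
    (ht : 1 ≤ t) :
    0 < t^3 + ((u+3*a)/2)*t^2 + (a*u)*t + (a*u-1)/2 := by
  nlinarith [mul_pos (show (0:ℝ) < 1+u by linarith) (show (0:ℝ) < 1+3*a by linarith),
    mul_nonneg (sub_nonneg.2 ht) (show (0:ℝ) ≤ 3 + u + 3*a + a*u by nlinarith),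
    mul_nonneg (mul_nonneg (sub_nonneg.2 ht) (sub_nonneg.2 ht))
      (show (0:ℝ) ≤ t + (u+3*a)/2 + 2 by nlinarith)]

/-- `f(t) < 0` for `t ≤ -1`. -/
lemma cubic_key_neg (a u t : ℝ) (ha₁ : 0 ≤ a) (ha₂ : a < 1) (hu₁ : -1 < u) (hu₂ : u ≤ 1)
    (ht : t ≤ -1) :
    t^3 + ((u+3*a)/2)*t^2 + (a*u)*t + (a*u-1)/2 < 0 := by
  nlinarith [mul_pos (show (0:ℝ) < 3-u by linarith) (show (0:ℝ) < 1-a by linarith),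
    mul_nonneg (neg_nonneg.2 (show t+1 ≤ 0 by linarith))
      (show (0:ℝ) ≤ (3-u)*(1-a) by nlinarith),
    mul_nonneg (mul_nonneg (neg_nonneg.2 (show t+1 ≤ 0 by linarith))
      (neg_nonneg.2 (show t+1 ≤ 0 by linarith)))
      (show (0:ℝ) ≤ -(t + (u+3*a)/2 - 2) by nlinarith)]

lemma cubic_aux (a u : ℝ) (ha₁ : 0 ≤ a) (ha₂ : a < 1) (hu₁ : -1 < u) (hu₂ : u ≤ 1) (z : ℂ)
    (hz2 : z^3 + (((u+3*a)/2 : ℝ):ℂ)*z^2 + ((a*u : ℝ):ℂ)*z + (((a*u-1)/2 : ℝ):ℂ) = 0)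
    (hnorm : 1 ≤ ‖z‖) : False := by
  obtain ⟨p, q⟩ := z
  have hre : p^3 - 3*p*q^2 + ((u+3*a)/2)*(p^2 - q^2) + (a*u)*p + (a*u-1)/2 = 0 := by
    have := congrArg Complex.re hz2
    simp [Complex.add_re, Complex.mul_re, Complex.mul_im, pow_succ] at this
    linarith [this]
  have him : q*(3*p^2 - q^2 + 2*((u+3*a)/2)*p + a*u) = 0 := by
    have := congrArg Complex.im hz2
    simp [Complex.add_im, Complex.mul_re, Complex.mul_im, pow_succ] at this
    nlinarith [this]
  have hn : (1:ℝ) ≤ p^2 + q^2 := by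
    have h2 : ‖Complex.mk p q‖^2 = p^2 + q^2 := by
      rw [Complex.sq_norm, Complex.normSq_apply]; ring
    nlinarith [norm_nonneg (Complex.mk p q)]
  rcases eq_or_ne q 0 with hq0 | hq0
  · -- real root
    rw [hq0] at hre hn
    have hroot : p^3 + ((u+3*a)/2)*p^2 + (a*u)*p + (a*u-1)/2 = 0 := by linarith [hre]
    rcases le_or_gt 1 p with hp1 | hp1
    · have := cubic_key_pos a u p ha₁ ha₂ hu₁ hu₂ hp1
      linarith
    · have hpneg : p ≤ -1 := by nlinarith
      have := cubic_key_neg a u p ha₁ ha₂ hu₁ hu₂ hpneg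
      linarith
  · -- complex root
    have him' : 3*p^2 - q^2 + 2*((u+3*a)/2)*p + a*u = 0 := by
      rcases mul_eq_zero.mp him with h | h
      · exact absurd h hq0
      · exact h
    set w : ℝ := -((u+3*a)/2) - 2*p with hwdef
    have hw : w^3 + ((u+3*a)/2)*w^2 + (a*u)*w + (a*u-1)/2 = 0 := by
      rw [hwdef]; linear_combination hre - (3*p + (u+3*a)/2) * him'
    have hnw : (p^2+q^2) * w = -((a*u-1)/2) := by
      rw [hwdef]; rw [hwdef] at hw; linear_combination hw - (-((u+3*a)/2) - 2*p) * him'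
    clear_value w
    have hd : (a*u-1)/2 < 0 := by nlinarith
    have hwpos : 0 < w := by
      by_contra hw0
      push_neg at hw0
      nlinarith [mul_nonpos_of_nonneg_of_nonpos (by nlinarith : (0:ℝ) ≤ p^2+q^2) hw0]
    have hwm : w ≤ (1 - a*u)/2 := by
      have h1 : 1 * w ≤ (p^2+q^2) * w := mul_le_mul_of_nonneg_right hn hwpos.le
      linarith
    have := cubic_key_mid a u w ha₁ ha₂ hu₁ hu₂ hwpos hwm
    linarith

/-- For `α ∈ [π/2, π)`, `a ∈ [0,1)` and `x = cos α`, all three roots of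
`z³ + (1/2 + (3/2)a + x)z² + (a + 2ax)z + (ax + (1/2)a - 1/2)` lie in the open unit disk. -/
theorem cubic_roots_in_open_disk (α a : ℝ) (hα₁ : Real.pi / 2 ≤ α) (hα₂ : α < Real.pi)
    (ha₁ : 0 ≤ a) (ha₂ : a < 1) (z : ℂ)
    (hz : z ^ 3 + ((1 / 2 : ℂ) + (3 / 2) * (a : ℂ) + (Real.cos α : ℂ)) * z ^ 2
        + ((a : ℂ) + 2 * (a : ℂ) * (Real.cos α : ℂ)) * z
        + ((a : ℂ) * (Real.cos α : ℂ) + (1 / 2) * (a : ℂ) - 1 / 2) = 0) :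
    ‖z‖ < 1 := by
  by_contra hnorm
  push_neg at hnorm
  have hx0 : Real.cos α ≤ 0 := Real.cos_nonpos_of_pi_div_two_le_of_le hα₁
    (by nlinarith [Real.pi_pos])
  have hxm : -1 < Real.cos α := by
    have h1 : Real.cos Real.pi < Real.cos α :=
      Real.cos_lt_cos_of_nonneg_of_le_pi (by linarith [Real.pi_pos]) le_rfl hα₂
    rw [Real.cos_pi] at h1; exact h1
  refine cubic_aux a (1 + 2*Real.cos α) ha₁ ha₂ (by linarith) (by linarith) z ?_ hnorm
  rw [← hz]; push_cast; ring
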